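/- Let f : [0,1] → [0,1]² be continuous with f(0) = (0,0) and f(1) = (1,1). Let a ∈ ℚ ∩ (0,1) and r ∈ ℚ with r > 0 be such that cl B(f(a), r) ⊆ (0,1)². Then 0 < p'_{a,r} ≤ p_{a,r} < a < q_{a,r} ≤ q'_{a,r} < 1, and the four points f(p_{a,r}), f(q_{a,r}), f(p'_{a,r}), f(q'_{a,r}) all lie on the boundary sphere { x ∈ ℝ² : ‖x - f(a)‖ = r }. -/

import Mathlib

open Set

noncomputable section

/-- The Euclidean plane. -/
abbrev E2 := EuclideanSpace ℝ (Fin 2)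

/-- The point `(x, y)` of the Euclidean plane. -/
def pt (x y : ℝ) : E2 := !₂[x, y]

/-- The closed unit square `[0,1]²`. -/
def unitSq : Set E2 := {p | p 0 ∈ Icc (0:ℝ) 1 ∧ p 1 ∈ Icc (0:ℝ) 1}

/-- The open unit square `(0,1)²`. -/
def openUnitSq : Set E2 := {p | p 0 ∈ Ioo (0:ℝ) 1 ∧ p 1 ∈ Ioo (0:ℝ) 1}

/-- `p_{a,r} = inf{ b ∈ (0,a) ∩ ℚ : f([b,a]) ⊆ B(f(a),r) }`. -/
def pTime (f : ℝ → E2) (a r : ℝ) : ℝ :=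
  sInf {b : ℝ | (∃ q : ℚ, (q:ℝ) = b) ∧ b ∈ Ioo 0 a ∧
    MapsTo f (Icc b a) (Metric.ball (f a) r)}

/-- `q_{a,r} = sup{ b ∈ (a,1) ∩ ℚ : f([a,b]) ⊆ B(f(a),r) }`. -/
def qTime (f : ℝ → E2) (a r : ℝ) : ℝ :=
  sSup {b : ℝ | (∃ q : ℚ, (q:ℝ) = b) ∧ b ∈ Ioo a 1 ∧
    MapsTo f (Icc a b) (Metric.ball (f a) r)}

/-- `p'_{a,r} = sup{ b ∈ (0,a) ∩ ℚ : f(b) ∉ cl B(f(a),r) }`. -/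
def pTime' (f : ℝ → E2) (a r : ℝ) : ℝ :=
  sSup {b : ℝ | (∃ q : ℚ, (q:ℝ) = b) ∧ b ∈ Ioo 0 a ∧
    f b ∉ closure (Metric.ball (f a) r)}

/-- `q'_{a,r} = inf{ b ∈ (a,1) ∩ ℚ : f(b) ∉ cl B(f(a),r) }`. -/
def qTime' (f : ℝ → E2) (a r : ℝ) : ℝ :=
  sInf {b : ℝ | (∃ q : ℚ, (q:ℝ) = b) ∧ b ∈ Ioo a 1 ∧
    f b ∉ closure (Metric.ball (f a) r)}

/-- `K_{a,r} = [p'_{a,r}, p_{a,r}]`. -/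
def Kint (f : ℝ → E2) (a r : ℝ) : Set ℝ := Icc (pTime' f a r) (pTime f a r)

/-- `L_{a,r} = [q_{a,r}, q'_{a,r}]`. -/
def Lint (f : ℝ → E2) (a r : ℝ) : Set ℝ := Icc (qTime f a r) (qTime' f a r)

/-- The exit times are ordered around `a` and the corresponding points of the path lie on
the boundary sphere of the ball. -/
theorem exit_times_on_sphere (f : ℝ → E2)
    (hfc : ContinuousOn f (Icc 0 1)) (hfm : MapsTo f (Icc 0 1) unitSq)
    (hf0 : f 0 = pt 0 0) (hf1 : f 1 = pt 1 1)
    (a r : ℚ) (ha : (a:ℝ) ∈ Ioo (0:ℝ) 1) (hr : (0:ℝ) < r)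
    (hball : closure (Metric.ball (f a) r) ⊆ openUnitSq) :
    0 < pTime' f a r ∧ pTime' f a r ≤ pTime f a r ∧ pTime f a r < a ∧
    (a:ℝ) < qTime f a r ∧ qTime f a r ≤ qTime' f a r ∧ qTime' f a r < 1 ∧
    ‖f (pTime f a r) - f a‖ = r ∧ ‖f (qTime f a r) - f a‖ = r ∧
    ‖f (pTime' f a r) - f a‖ = r ∧ ‖f (qTime' f a r) - f a‖ = r := by
  classical
  have haI : (a:ℝ) ∈ Icc (0:ℝ) 1 := ⟨le_of_lt ha.1, le_of_lt ha.2⟩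
  have hclB : closure (Metric.ball (f a) (r:ℝ)) = Metric.closedBall (f a) (r:ℝ) :=
    closure_ball _ (ne_of_gt hr)
  -- continuity helpers
  have hnear : ∀ t0 ∈ Icc (0:ℝ) 1, ∀ ε > (0:ℝ), ∃ δ > (0:ℝ),
      ∀ t ∈ Icc (0:ℝ) 1, |t - t0| < δ → dist (f t) (f t0) < ε := by
    intro t0 ht0 ε hε
    have h := hfc t0 ht0
    rw [Metric.continuousWithinAt_iff] at h
    obtain ⟨δ, hδ, h⟩ := h ε hε
    exact ⟨δ, hδ, fun t ht hdist => h ht (by rwa [Real.dist_eq])⟩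
  have hlt : ∀ t0 ∈ Icc (0:ℝ) 1, dist (f t0) (f a) < r → ∃ δ > (0:ℝ),
      ∀ t ∈ Icc (0:ℝ) 1, |t - t0| < δ → dist (f t) (f a) < r := by
    intro t0 ht0 h
    obtain ⟨δ, hδ, hn⟩ := hnear t0 ht0 (r - dist (f t0) (f a)) (by linarith)
    refine ⟨δ, hδ, fun t ht hd => ?_⟩
    have h1 := hn t ht hd
    have htri := dist_triangle (f t) (f t0) (f a)
    linarith
  have hgt : ∀ t0 ∈ Icc (0:ℝ) 1, (r:ℝ) < dist (f t0) (f a) → ∃ δ > (0:ℝ),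
      ∀ t ∈ Icc (0:ℝ) 1, |t - t0| < δ → (r:ℝ) < dist (f t) (f a) := by
    intro t0 ht0 h
    obtain ⟨δ, hδ, hn⟩ := hnear t0 ht0 (dist (f t0) (f a) - r) (by linarith)
    refine ⟨δ, hδ, fun t ht hd => ?_⟩
    have h1 := hn t ht hd
    have htri := dist_triangle (f t0) (f t) (f a)
    rw [dist_comm (f t0) (f t)] at htri
    linarith
  -- the four sets
  set Sp : Set ℝ := {b : ℝ | (∃ q : ℚ, (q:ℝ) = b) ∧ b ∈ Ioo 0 (a:ℝ) ∧
    MapsTo f (Icc b (a:ℝ)) (Metric.ball (f a) (r:ℝ))} with hSpdef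
  set Sq : Set ℝ := {b : ℝ | (∃ q : ℚ, (q:ℝ) = b) ∧ b ∈ Ioo (a:ℝ) 1 ∧
    MapsTo f (Icc (a:ℝ) b) (Metric.ball (f a) (r:ℝ))} with hSqdef
  set Sp' : Set ℝ := {b : ℝ | (∃ q : ℚ, (q:ℝ) = b) ∧ b ∈ Ioo 0 (a:ℝ) ∧
    f b ∉ closure (Metric.ball (f a) (r:ℝ))} with hSp'def
  set Sq' : Set ℝ := {b : ℝ | (∃ q : ℚ, (q:ℝ) = b) ∧ b ∈ Ioo (a:ℝ) 1 ∧
    f b ∉ closure (Metric.ball (f a) (r:ℝ))} with hSq'def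
  have hpT : pTime f a r = sInf Sp := rfl
  have hqT : qTime f a r = sSup Sq := rfl
  have hpT' : pTime' f a r = sSup Sp' := rfl
  have hqT' : qTime' f a r = sInf Sq' := rfl
  -- nonemptiness of Sp and Sq
  have hfa_lt : dist (f a) (f a) < r := by simpa using hr
  obtain ⟨δa, hδa, hna⟩ := hlt a haI hfa_lt
  obtain ⟨b₀, hb₀1, hb₀2⟩ := exists_rat_btwn
    (show max ((a:ℝ) - δa) 0 < (a:ℝ) from max_lt (by linarith) ha.1)
  have hb₀pos : (0:ℝ) < b₀ := lt_of_le_of_lt (le_max_right _ _) hb₀1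
  have hb₀Sp : (b₀:ℝ) ∈ Sp := by
    refine ⟨⟨b₀, rfl⟩, ⟨hb₀pos, hb₀2⟩, fun t ht => ?_⟩
    have ht01 : t ∈ Icc (0:ℝ) 1 :=
      ⟨le_trans (le_of_lt hb₀pos) ht.1, le_trans ht.2 (le_of_lt ha.2)⟩
    have hab : (a:ℝ) - δa < b₀ := lt_of_le_of_lt (le_max_left _ _) hb₀1
    refine Metric.mem_ball.2 (hna t ht01 ?_)
    rw [abs_sub_lt_iff]
    constructor <;> [linarith [ht.2]; linarith [ht.1]]
  obtain ⟨c₀, hc₀1, hc₀2⟩ := exists_rat_btwn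
    (show (a:ℝ) < min ((a:ℝ) + δa) 1 from lt_min (by linarith) ha.2)
  have hc₀lt1 : (c₀:ℝ) < 1 := lt_of_lt_of_le hc₀2 (min_le_right _ _)
  have hc₀Sq : (c₀:ℝ) ∈ Sq := by
    refine ⟨⟨c₀, rfl⟩, ⟨hc₀1, hc₀lt1⟩, fun t ht => ?_⟩
    have ht01 : t ∈ Icc (0:ℝ) 1 :=
      ⟨le_trans (le_of_lt ha.1) ht.1, le_trans ht.2 (le_of_lt hc₀lt1)⟩
    have hab : (c₀:ℝ) < (a:ℝ) + δa := lt_of_lt_of_le hc₀2 (min_le_left _ _)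
    refine Metric.mem_ball.2 (hna t ht01 ?_)
    rw [abs_sub_lt_iff]
    constructor <;> [linarith [ht.2]; linarith [ht.1]]
  have hSpne : Sp.Nonempty := ⟨b₀, hb₀Sp⟩
  have hSqne : Sq.Nonempty := ⟨c₀, hc₀Sq⟩
  have hSpbdd : BddBelow Sp := ⟨0, fun x hx => le_of_lt hx.2.1.1⟩
  have hSqbdd : BddAbove Sq := ⟨1, fun x hx => le_of_lt hx.2.1.2⟩
  have hp_lt_a : pTime f a r < a := hpT ▸ lt_of_le_of_lt (csInf_le hSpbdd hb₀Sp) hb₀2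
  have hq_gt_a : (a:ℝ) < qTime f a r := hqT ▸ lt_of_lt_of_le hc₀1 (le_csSup hSqbdd hc₀Sq)
  have hp_nonneg : 0 ≤ pTime f a r := hpT ▸ le_csInf hSpne fun x hx => le_of_lt hx.2.1.1
  have hq_le_1 : qTime f a r ≤ 1 := hqT ▸ csSup_le hSqne fun x hx => le_of_lt hx.2.1.2
  -- nonemptiness of Sp' and Sq'
  have h0I : (0:ℝ) ∈ Icc (0:ℝ) 1 := by norm_num
  have h1I : (1:ℝ) ∈ Icc (0:ℝ) 1 := by norm_num
  have h00 : f 0 ∉ closure (Metric.ball (f a) (r:ℝ)) := by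
    intro h
    have h2 := hball h
    rw [hf0] at h2
    simp [openUnitSq, pt] at h2
  have h11 : f 1 ∉ closure (Metric.ball (f a) (r:ℝ)) := by
    intro h
    have h2 := hball h
    rw [hf1] at h2
    simp [openUnitSq, pt] at h2
  have hg0 : (r:ℝ) < dist (f 0) (f a) := by
    by_contra h
    exact h00 (hclB ▸ Metric.mem_closedBall.2 (not_lt.1 h))
  have hg1 : (r:ℝ) < dist (f 1) (f a) := by
    by_contra h
    exact h11 (hclB ▸ Metric.mem_closedBall.2 (not_lt.1 h))
  obtain ⟨δ0, hδ0, hn0⟩ := hgt 0 h0I hg0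
  obtain ⟨δ1, hδ1, hn1⟩ := hgt 1 h1I hg1
  obtain ⟨c, hc1, hc2⟩ := exists_rat_btwn (show (0:ℝ) < min δ0 (a:ℝ) from lt_min hδ0 ha.1)
  have hc_lt_a : (c:ℝ) < a := lt_of_lt_of_le hc2 (min_le_right _ _)
  have hcSp' : (c:ℝ) ∈ Sp' := by
    refine ⟨⟨c, rfl⟩, ⟨hc1, hc_lt_a⟩, ?_⟩
    rw [hclB]
    intro hmem
    have hcI : (c:ℝ) ∈ Icc (0:ℝ) 1 := ⟨le_of_lt hc1, le_of_lt (lt_trans hc_lt_a ha.2)⟩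
    have hcd : |(c:ℝ) - 0| < δ0 := by
      rw [abs_sub_lt_iff]
      have := lt_of_lt_of_le hc2 (min_le_left _ _)
      constructor <;> linarith
    exact absurd (Metric.mem_closedBall.1 hmem) (not_le.2 (hn0 c hcI hcd))
  obtain ⟨d, hd1, hd2⟩ := exists_rat_btwn
    (show max (a:ℝ) (1 - δ1) < 1 from max_lt ha.2 (by linarith))
  have hd_gt_a : (a:ℝ) < d := lt_of_le_of_lt (le_max_left _ _) hd1
  have hdSq' : (d:ℝ) ∈ Sq' := by
    refine ⟨⟨d, rfl⟩, ⟨hd_gt_a, hd2⟩, ?_⟩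
    rw [hclB]
    intro hmem
    have hdI : (d:ℝ) ∈ Icc (0:ℝ) 1 := ⟨le_of_lt (lt_trans ha.1 hd_gt_a), le_of_lt hd2⟩
    have hdd : |(d:ℝ) - 1| < δ1 := by
      rw [abs_sub_lt_iff]
      have := lt_of_le_of_lt (le_max_right (a:ℝ) (1 - δ1)) hd1
      constructor <;> linarith
    exact absurd (Metric.mem_closedBall.1 hmem) (not_le.2 (hn1 d hdI hdd))
  have hSp'ne : Sp'.Nonempty := ⟨c, hcSp'⟩
  have hSq'ne : Sq'.Nonempty := ⟨d, hdSq'⟩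
  have hSp'bdd : BddAbove Sp' := ⟨a, fun x hx => le_of_lt hx.2.1.2⟩
  have hSq'bdd : BddBelow Sq' := ⟨a, fun x hx => le_of_lt hx.2.1.1⟩
  have hp'_pos : 0 < pTime' f a r := hpT' ▸ lt_of_lt_of_le hc1 (le_csSup hSp'bdd hcSp')
  have hq'_lt_1 : qTime' f a r < 1 := hqT' ▸ lt_of_le_of_lt (csInf_le hSq'bdd hdSq') hd2
  -- ordering p' ≤ p and q ≤ q'
  have hp'p : pTime' f a r ≤ pTime f a r := by
    rw [hpT', hpT]
    refine csSup_le hSp'ne fun b' hb' => le_csInf hSpne fun b hb => ?_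
    by_contra hlt'
    push_neg at hlt'
    exact hb'.2.2 (subset_closure (hb.2.2 ⟨le_of_lt hlt', le_of_lt hb'.2.1.2⟩))
  have hqq' : qTime f a r ≤ qTime' f a r := by
    rw [hqT', hqT]
    refine csSup_le hSqne fun b hb => le_csInf hSq'ne fun b' hb' => ?_
    by_contra hlt'
    push_neg at hlt'
    exact hb'.2.2 (subset_closure (hb.2.2 ⟨le_of_lt hb'.2.1.1, le_of_lt hlt'⟩))
  have hp'_lt_a : pTime' f a r < a := lt_of_le_of_lt hp'p hp_lt_a
  have hq'_gt_a : (a:ℝ) < qTime' f a r := lt_of_lt_of_le hq_gt_a hqq'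
  have hp_pos : 0 < pTime f a r := lt_of_lt_of_le hp'_pos hp'p
  have hq_lt_1 : qTime f a r < 1 := lt_of_le_of_lt hqq' hq'_lt_1
  have hpI : pTime f a r ∈ Icc (0:ℝ) 1 := ⟨hp_nonneg, le_of_lt (lt_trans hp_lt_a ha.2)⟩
  have hqI : qTime f a r ∈ Icc (0:ℝ) 1 := ⟨le_of_lt (lt_trans ha.1 hq_gt_a), hq_le_1⟩
  have hp'I : pTime' f a r ∈ Icc (0:ℝ) 1 :=
    ⟨le_of_lt hp'_pos, le_of_lt (lt_trans hp'_lt_a ha.2)⟩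
  have hq'I : qTime' f a r ∈ Icc (0:ℝ) 1 :=
    ⟨le_of_lt (lt_trans ha.1 hq'_gt_a), le_of_lt hq'_lt_1⟩
  -- interior behaviour
  have hmidp : ∀ x, pTime f a r < x → x ≤ (a:ℝ) → dist (f x) (f a) < r := by
    intro x hx1 hx2
    rw [hpT] at hx1
    obtain ⟨b, hbS, hbx⟩ := exists_lt_of_csInf_lt hSpne hx1
    exact Metric.mem_ball.1 (hbS.2.2 ⟨le_of_lt hbx, hx2⟩)
  have hmidq : ∀ x, (a:ℝ) ≤ x → x < qTime f a r → dist (f x) (f a) < r := by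
    intro x hx1 hx2
    rw [hqT] at hx2
    obtain ⟨b, hbS, hbx⟩ := exists_lt_of_lt_csSup hSqne hx2
    exact Metric.mem_ball.1 (hbS.2.2 ⟨hx1, le_of_lt hbx⟩)
  -- f(pTime) on the sphere
  have hgp_le : dist (f (pTime f a r)) (f a) ≤ r := by
    by_contra h
    push_neg at h
    obtain ⟨δ, hδ, hn⟩ := hgt _ hpI h
    set x := min (pTime f a r + δ/2) (a:ℝ) with hxdef
    have hx1 : pTime f a r < x := lt_min (by linarith) hp_lt_a
    have hx2 : x ≤ a := min_le_right _ _
    have hxI : x ∈ Icc (0:ℝ) 1 :=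
      ⟨le_trans hpI.1 (le_of_lt hx1), le_trans hx2 (le_of_lt ha.2)⟩
    have hdx : |x - pTime f a r| < δ := by
      rw [abs_sub_lt_iff]
      have h3 : x ≤ pTime f a r + δ/2 := min_le_left _ _
      constructor <;> linarith
    exact absurd (hmidp x hx1 hx2) (not_lt.2 (le_of_lt (hn x hxI hdx)))
  have hgp_ge : (r:ℝ) ≤ dist (f (pTime f a r)) (f a) := by
    by_contra h
    push_neg at h
    obtain ⟨δ, hδ, hn⟩ := hlt _ hpI h
    obtain ⟨b, hb1, hb2⟩ := exists_rat_btwn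
      (show max (pTime f a r - δ) 0 < pTime f a r from max_lt (by linarith) hp_pos)
    have hbmem : (b:ℝ) ∈ Sp := by
      refine ⟨⟨b, rfl⟩, ⟨lt_of_le_of_lt (le_max_right _ _) hb1,
        lt_trans hb2 hp_lt_a⟩, fun t ht => ?_⟩
      have hbpos : (0:ℝ) < b := lt_of_le_of_lt (le_max_right _ _) hb1
      have ht01 : t ∈ Icc (0:ℝ) 1 :=
        ⟨le_trans (le_of_lt hbpos) ht.1, le_trans ht.2 (le_of_lt ha.2)⟩
      rcases le_or_gt t (pTime f a r) with h' | h'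
      · refine Metric.mem_ball.2 (hn t ht01 ?_)
        rw [abs_sub_lt_iff]
        have h4 : pTime f a r - δ < b := lt_of_le_of_lt (le_max_left _ _) hb1
        constructor <;> linarith [ht.1]
      · exact Metric.mem_ball.2 (hmidp t h' ht.2)
    have : pTime f a r ≤ b := hpT ▸ csInf_le hSpbdd hbmem
    exact absurd this (not_le.2 hb2)
  -- f(qTime) on the sphere
  have hgq_le : dist (f (qTime f a r)) (f a) ≤ r := by
    by_contra h
    push_neg at h
    obtain ⟨δ, hδ, hn⟩ := hgt _ hqI h
    set x := max (qTime f a r - δ/2) (a:ℝ) with hxdef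
    have hx1 : x < qTime f a r := max_lt (by linarith) hq_gt_a
    have hx2 : (a:ℝ) ≤ x := le_max_right _ _
    have hxI : x ∈ Icc (0:ℝ) 1 :=
      ⟨le_trans (le_of_lt ha.1) hx2, le_trans (le_of_lt hx1) hqI.2⟩
    have hdx : |x - qTime f a r| < δ := by
      rw [abs_sub_lt_iff]
      have h3 : qTime f a r - δ/2 ≤ x := le_max_left _ _
      constructor <;> linarith
    exact absurd (hmidq x hx2 hx1) (not_lt.2 (le_of_lt (hn x hxI hdx)))
  have hgq_ge : (r:ℝ) ≤ dist (f (qTime f a r)) (f a) := by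
    by_contra h
    push_neg at h
    obtain ⟨δ, hδ, hn⟩ := hlt _ hqI h
    obtain ⟨b, hb1, hb2⟩ := exists_rat_btwn
      (show qTime f a r < min (qTime f a r + δ) 1 from lt_min (by linarith) hq_lt_1)
    have hblt1 : (b:ℝ) < 1 := lt_of_lt_of_le hb2 (min_le_right _ _)
    have hbmem : (b:ℝ) ∈ Sq := by
      refine ⟨⟨b, rfl⟩, ⟨lt_trans hq_gt_a hb1, hblt1⟩, fun t ht => ?_⟩
      have ht01 : t ∈ Icc (0:ℝ) 1 :=
        ⟨le_trans (le_of_lt ha.1) ht.1, le_trans ht.2 (le_of_lt hblt1)⟩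
      rcases lt_or_ge t (qTime f a r) with h' | h'
      · exact Metric.mem_ball.2 (hmidq t ht.1 h')
      · refine Metric.mem_ball.2 (hn t ht01 ?_)
        rw [abs_sub_lt_iff]
        have h4 : (b:ℝ) < qTime f a r + δ := lt_of_lt_of_le hb2 (min_le_left _ _)
        constructor <;> linarith [ht.2]
    have : b ≤ qTime f a r := hqT ▸ le_csSup hSqbdd hbmem
    exact absurd this (not_le.2 hb1)
  -- f(pTime') on the sphere
  have hgp'_ge : (r:ℝ) ≤ dist (f (pTime' f a r)) (f a) := by
    by_contra h
    push_neg at h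
    obtain ⟨δ, hδ, hn⟩ := hlt _ hp'I h
    have hlt2 : pTime' f a r - δ < pTime' f a r := by linarith
    rw [hpT'] at hlt2
    obtain ⟨b, hbS, hb⟩ := exists_lt_of_lt_csSup hSp'ne hlt2
    have hble : b ≤ pTime' f a r := hpT' ▸ le_csSup hSp'bdd hbS
    have hbI : b ∈ Icc (0:ℝ) 1 :=
      ⟨le_of_lt hbS.2.1.1, le_of_lt (lt_trans hbS.2.1.2 ha.2)⟩
    have hbd : dist (f b) (f a) < r := by
      refine hn b hbI ?_
      rw [abs_sub_lt_iff]
      constructor <;> linarith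
    exact hbS.2.2 (subset_closure (Metric.mem_ball.2 hbd))
  have hgp'_le : dist (f (pTime' f a r)) (f a) ≤ r := by
    by_contra h
    push_neg at h
    obtain ⟨δ, hδ, hn⟩ := hgt _ hp'I h
    obtain ⟨b, hb1, hb2⟩ := exists_rat_btwn
      (show pTime' f a r < min (pTime' f a r + δ) (a:ℝ) from lt_min (by linarith) hp'_lt_a)
    have hblta : (b:ℝ) < a := lt_of_lt_of_le hb2 (min_le_right _ _)
    have hbmem : (b:ℝ) ∈ Sp' := by
      refine ⟨⟨b, rfl⟩, ⟨lt_trans hp'_pos hb1, hblta⟩, ?_⟩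
      rw [hclB]
      intro hmem
      have hbI : (b:ℝ) ∈ Icc (0:ℝ) 1 :=
        ⟨le_of_lt (lt_trans hp'_pos hb1), le_of_lt (lt_trans hblta ha.2)⟩
      have hbd : (r:ℝ) < dist (f b) (f a) := by
        refine hn b hbI ?_
        rw [abs_sub_lt_iff]
        have h4 : (b:ℝ) < pTime' f a r + δ := lt_of_lt_of_le hb2 (min_le_left _ _)
        constructor <;> linarith
      exact absurd (Metric.mem_closedBall.1 hmem) (not_le.2 hbd)
    have : b ≤ pTime' f a r := hpT' ▸ le_csSup hSp'bdd hbmem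
    exact absurd this (not_le.2 hb1)
  -- f(qTime') on the sphere
  have hgq'_ge : (r:ℝ) ≤ dist (f (qTime' f a r)) (f a) := by
    by_contra h
    push_neg at h
    obtain ⟨δ, hδ, hn⟩ := hlt _ hq'I h
    have hlt2 : qTime' f a r < qTime' f a r + δ := by linarith
    rw [hqT'] at hlt2
    obtain ⟨b, hbS, hb⟩ := exists_lt_of_csInf_lt hSq'ne hlt2
    have hble : qTime' f a r ≤ b := hqT' ▸ csInf_le hSq'bdd hbS
    have hbI : b ∈ Icc (0:ℝ) 1 :=
      ⟨le_of_lt (lt_trans ha.1 hbS.2.1.1), le_of_lt hbS.2.1.2⟩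
    have hbd : dist (f b) (f a) < r := by
      refine hn b hbI ?_
      rw [abs_sub_lt_iff]
      constructor <;> linarith
    exact hbS.2.2 (subset_closure (Metric.mem_ball.2 hbd))
  have hgq'_le : dist (f (qTime' f a r)) (f a) ≤ r := by
    by_contra h
    push_neg at h
    obtain ⟨δ, hδ, hn⟩ := hgt _ hq'I h
    obtain ⟨b, hb1, hb2⟩ := exists_rat_btwn
      (show max (qTime' f a r - δ) (a:ℝ) < qTime' f a r from max_lt (by linarith) hq'_gt_a)
    have hbgta : (a:ℝ) < b := lt_of_le_of_lt (le_max_right _ _) hb1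
    have hbmem : (b:ℝ) ∈ Sq' := by
      refine ⟨⟨b, rfl⟩, ⟨hbgta, lt_trans hb2 hq'_lt_1⟩, ?_⟩
      rw [hclB]
      intro hmem
      have hbI : (b:ℝ) ∈ Icc (0:ℝ) 1 :=
        ⟨le_of_lt (lt_trans ha.1 hbgta), le_of_lt (lt_trans hb2 hq'_lt_1)⟩
      have hbd : (r:ℝ) < dist (f b) (f a) := by
        refine hn b hbI ?_
        rw [abs_sub_lt_iff]
        have h4 : qTime' f a r - δ < b := lt_of_le_of_lt (le_max_left _ _) hb1
        constructor <;> linarith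
      exact absurd (Metric.mem_closedBall.1 hmem) (not_le.2 hbd)
    have : qTime' f a r ≤ b := hqT' ▸ csInf_le hSq'bdd hbmem
    exact absurd this (not_le.2 hb2)
  refine ⟨hp'_pos, hp'p, hp_lt_a, hq_gt_a, hqq', hq'_lt_1, ?_, ?_, ?_, ?_⟩ <;>
    rw [← dist_eq_norm]
  · exact le_antisymm hgp_le hgp_ge
  · exact le_antisymm hgq_le hgq_ge
  · exact le_antisymm hgp'_le hgp'_ge
  · exact le_antisymm hgq'_le hgq'_ge
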